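/- If the S-module D^{(m)}(A) is free, then its rank equals s_m = binom(n+m-1, m). -/

import Mathlib

open MvPolynomial

/-- The linear form `Σ v_j x_j` with coefficient vector `v`. -/
noncomputable def lf {K : Type*} [Field K] {n : ℕ} (v : Fin n → K) :
    MvPolynomial (Fin n) K :=
  ∑ j, MvPolynomial.C (v j) * MvPolynomial.X j

/-- `∂^α = ∂_1^{α_1} ⋯ ∂_n^{α_n}` as a `K`-linear endomorphism of the polynomial ring. -/
noncomputable def pdOp (K : Type*) [Field K] (n : ℕ) (α : Fin n → ℕ) :
    Module.End K (MvPolynomial (Fin n) K) :=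
  (List.ofFn fun j : Fin n =>
    ((MvPolynomial.pderiv j).toLinearMap : Module.End K (MvPolynomial (Fin n) K)) ^ (α j)).prod

/-- The constant coefficient derivation `Σ d_j ∂_j`. -/
noncomputable def delOp (K : Type*) [Field K] (n : ℕ) (d : Fin n → K) :
    Module.End K (MvPolynomial (Fin n) K) :=
  ∑ j, d j • ((MvPolynomial.pderiv j).toLinearMap : Module.End K (MvPolynomial (Fin n) K))

/-- The `S`-module of differential operators homogeneous of order `m`,
i.e. `S`-linear combinations of the `∂^α` with `|α| = m`. -/
noncomputable def homOrder (K : Type*) [Field K] (n m : ℕ) :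
    Submodule (MvPolynomial (Fin n) K) (Module.End K (MvPolynomial (Fin n) K)) :=
  Submodule.span (MvPolynomial (Fin n) K)
    {θ | ∃ α : Fin n → ℕ, (∑ j, α j) = m ∧ θ = pdOp K n α}

/-- The operators preserving the principal ideal `QS`. -/
noncomputable def presIdeal (K : Type*) [Field K] (n : ℕ) (Q : MvPolynomial (Fin n) K) :
    Submodule (MvPolynomial (Fin n) K) (Module.End K (MvPolynomial (Fin n) K)) where
  carrier := {θ | ∀ f, Q ∣ f → Q ∣ θ f}
  add_mem' := by
    intro θ₁ θ₂ h₁ h₂ f hf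
    simpa using dvd_add (h₁ f hf) (h₂ f hf)
  zero_mem' := by intro f hf; simp
  smul_mem' := by
    intro c θ hθ f hf
    simpa [smul_eq_mul] using Dvd.dvd.mul_left (hθ f hf) c

/-- `D^{(m)}(𝒜)`, for the arrangement defined by `Q`. -/
noncomputable def Dmod (K : Type*) [Field K] (n : ℕ) (Q : MvPolynomial (Fin n) K) (m : ℕ) :
    Submodule (MvPolynomial (Fin n) K) (Module.End K (MvPolynomial (Fin n) K)) :=
  homOrder K n m ⊓ presIdeal K n Q

/-- The Euler operator of order `m`. -/
noncomputable def euler (K : Type*) [Field K] (n m : ℕ) :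
    Module.End K (MvPolynomial (Fin n) K) :=
  ∑ α ∈ Finset.Nat.antidiagonalTuple n m,
    ((Nat.multinomial Finset.univ α : MvPolynomial (Fin n) K) *
      ∏ j, MvPolynomial.X j ^ α j) • pdOp K n α

/-- `θ` is homogeneous (of order `m`) of polynomial degree `p`. -/
def homogOfPdeg (K : Type*) [Field K] (n m p : ℕ)
    (θ : Module.End K (MvPolynomial (Fin n) K)) : Prop :=
  ∃ c : (Fin n → ℕ) → MvPolynomial (Fin n) K,
    (∀ α, (c α).IsHomogeneous p) ∧
    θ = ∑ α ∈ Finset.Nat.antidiagonalTuple n m, c α • pdOp K n α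

/-- A generic arrangement: any `n` of the defining linear forms are linearly independent. -/
def Generic {K : Type*} [Field K] {n r : ℕ} (a : Fin r → (Fin n → K)) : Prop :=
  ∀ s : Finset (Fin r), s.card = n → LinearIndependent K (fun i : s => a (i : Fin r))

/-- `P_𝓗 = ∏_{H ∉ 𝓗} p_H`. -/
noncomputable def PH {K : Type*} [Field K] {n r : ℕ} (a : Fin r → (Fin n → K))
    (H : Finset (Fin r)) : MvPolynomial (Fin n) K :=
  ∏ i ∈ Hᶜ, lf (a i)

/-- `x^α/α!`. -/
noncomputable def monDiv (K : Type*) [Field K] (n : ℕ) (α : Fin n → ℕ) :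
    MvPolynomial (Fin n) K :=
  MvPolynomial.C (((∏ j, (α j).factorial : ℕ) : K))⁻¹ * ∏ j, MvPolynomial.X j ^ α j

section Aux

variable {K : Type*} [Field K] {n : ℕ}

lemma pderiv_pow_monomial (j : Fin n) (k : ℕ)
    (s : (Fin n) →₀ ℕ) (a : K) :
    (((MvPolynomial.pderiv j).toLinearMap : Module.End K (MvPolynomial (Fin n) K)) ^ k)
        (MvPolynomial.monomial s a)
      = MvPolynomial.monomial (s - Finsupp.single j k)
          (a * ((s j).descFactorial k : K)) := by
  induction k generalizing s a with
  | zero => simp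
  | succ k ih =>
    rw [pow_succ, Module.End.mul_apply]
    rw [show ((MvPolynomial.pderiv j).toLinearMap : Module.End K (MvPolynomial (Fin n) K))
        ((MvPolynomial.monomial s) a) = MvPolynomial.pderiv j ((MvPolynomial.monomial s) a)
        from rfl, pderiv_monomial, ih]
    have h1 : s - Finsupp.single j 1 - Finsupp.single j k = s - Finsupp.single j (k+1) := by
      ext i
      simp only [Finsupp.tsub_apply, Finsupp.single_apply]
      rcases eq_or_ne j i with rfl | h
      · simp; omega
      · simp [h]
    have h2 : ((s - Finsupp.single j 1 : Fin n →₀ ℕ)) j = s j - 1 := by simp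
    rw [h1, h2, mul_assoc]
    congr 2
    rcases Nat.eq_zero_or_pos (s j) with h0 | hp
    · simp [h0]
    · obtain ⟨t, ht⟩ := Nat.exists_eq_add_of_le hp
      have ht' : s j = t + 1 := by omega
      rw [ht']
      have : t + 1 - 1 = t := rfl
      rw [this, Nat.succ_descFactorial_succ]
      push_cast
      ring

lemma pdOp_list (α : Fin n → ℕ) (l : List (Fin n)) (hl : l.Nodup)
    (s : Fin n →₀ ℕ) (a : K) :
    ((l.map fun j => ((MvPolynomial.pderiv j).toLinearMap :
        Module.End K (MvPolynomial (Fin n) K)) ^ (α j)).prod)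
      (MvPolynomial.monomial s a)
    = MvPolynomial.monomial (s - (l.map fun i => Finsupp.single i (α i)).sum)
        (a * (l.map fun j => ((s j).descFactorial (α j) : K)).prod) := by
  induction l generalizing s a with
  | nil => simp
  | cons j l ih =>
    have hj : j ∉ l := (List.nodup_cons.mp hl).1
    simp only [List.map_cons, List.prod_cons, List.sum_cons, Module.End.mul_apply]
    rw [ih (List.nodup_cons.mp hl).2, pderiv_pow_monomial]
    have hT : ((l.map fun i => Finsupp.single i (α i)).sum : Fin n →₀ ℕ) j = 0 := by
      have h := map_list_sum (Finsupp.applyAddHom (M := ℕ) j)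
        (l.map fun i => Finsupp.single i (α i))
      simp only [Finsupp.applyAddHom_apply] at h
      rw [h, List.map_map]
      apply List.sum_eq_zero
      intro x hx
      obtain ⟨i, hi, rfl⟩ := List.mem_map.mp hx
      have : i ≠ j := fun hij => hj (hij ▸ hi)
      simp [Finsupp.single_apply, this]
    have hsT : ((s - (l.map fun i => Finsupp.single i (α i)).sum : Fin n →₀ ℕ)) j = s j := by
      simp [Finsupp.tsub_apply, hT]
    congr 1
    · rw [tsub_tsub, add_comm]
    · rw [hsT]; ring

lemma sum_single_eq (α : Fin n → ℕ) :
    (∑ i, Finsupp.single i (α i)) = Finsupp.equivFunOnFinite.symm α := by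
  ext k
  rw [Finsupp.finset_sum_apply]
  simp [Finsupp.single_apply, Finsupp.equivFunOnFinite]
  rfl

lemma pdOp_monomial (α : Fin n → ℕ) (s : Fin n →₀ ℕ) (a : K) :
    pdOp K n α (MvPolynomial.monomial s a)
    = MvPolynomial.monomial (s - Finsupp.equivFunOnFinite.symm α)
        (a * ∏ j, ((s j).descFactorial (α j) : K)) := by
  rw [pdOp, List.ofFn_eq_map, pdOp_list α _ (List.nodup_finRange n)]
  rw [← List.ofFn_eq_map, List.sum_ofFn, sum_single_eq]
  rw [show ((List.finRange n).map fun j => ((s j).descFactorial (α j) : K))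
      = List.ofFn fun j => ((s j).descFactorial (α j) : K) from (List.ofFn_eq_map).symm,
    List.prod_ofFn]

lemma pdOp_eval_self (α : Fin n → ℕ) :
    pdOp K n α (MvPolynomial.monomial (Finsupp.equivFunOnFinite.symm α) (1:K))
      = MvPolynomial.C (((∏ j, (α j).factorial : ℕ) : K)) := by
  rw [pdOp_monomial]
  have hs : ∀ j, (Finsupp.equivFunOnFinite.symm α) j = α j := fun j => rfl
  simp [hs, Nat.descFactorial_self, MvPolynomial.monomial_zero', Nat.cast_prod]

lemma pdOp_eval_ne (α α' : Fin n → ℕ) (hsum : ∑ j, α' j = ∑ j, α j) (hne : α' ≠ α) :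
    pdOp K n α' (MvPolynomial.monomial (Finsupp.equivFunOnFinite.symm α) (1:K)) = 0 := by
  obtain ⟨j0, hj0⟩ : ∃ j, α j < α' j := by
    by_contra hc
    push_neg at hc
    refine hne (funext fun j => ?_)
    exact ((Finset.sum_eq_sum_iff_of_le (fun i _ => hc i)).mp hsum j (Finset.mem_univ j))
  rw [pdOp_monomial]
  have hs : ∀ j, (Finsupp.equivFunOnFinite.symm α) j = α j := fun j => rfl
  have : ∏ j, (((α j).descFactorial (α' j) : K)) = 0 := by
    apply Finset.prod_eq_zero (Finset.mem_univ j0)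
    rw [Nat.descFactorial_eq_zero_iff_lt.mpr hj0]
    simp
  simp only [hs]
  rw [this, mul_zero, MvPolynomial.monomial_zero]

end Aux

section Aux2
variable {K : Type*} [Field K] {n : ℕ}

lemma card_adt (n m : ℕ) :
    (Finset.Nat.antidiagonalTuple n m).card = (n + m - 1).choose m := by
  classical
  have key : ∀ (f : Fin n →₀ ℕ), (f.sum fun _ k => k) = ∑ j, f j := fun f =>
    Finsupp.sum_fintype _ _ (fun _ => rfl)
  have e : ↥(Finset.Nat.antidiagonalTuple n m) ≃ Sym (Fin n) m :=
    { toFun := fun α => ⟨Finsupp.toMultiset (Finsupp.equivFunOnFinite.symm ↑α), by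
        rw [Finsupp.card_toMultiset]
        have := key (Finsupp.equivFunOnFinite.symm (↑α : Fin n → ℕ))
        simp only [Function.id_def] at *
        rw [this]
        simpa using Finset.Nat.mem_antidiagonalTuple.mp α.2⟩
      invFun := fun s => ⟨Finsupp.equivFunOnFinite (Multiset.toFinsupp ↑s), by
        rw [Finset.Nat.mem_antidiagonalTuple]
        have h := Multiset.toFinsupp_sum_eq (↑s : Multiset (Fin n))
        simp only [Function.id_def] at h
        rw [key] at h
        simpa [s.2] using h⟩
      left_inv := fun α => by
        ext1
        simp [Multiset.toFinsupp_toMultiset]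
      right_inv := fun s => by
        ext1
        simp [Multiset.toFinsupp_toMultiset] }
  have h1 : Fintype.card ↥(Finset.Nat.antidiagonalTuple n m) = Fintype.card (Sym (Fin n) m) :=
    Fintype.card_congr e
  rw [Fintype.card_coe] at h1
  rw [h1, Sym.card_sym_eq_choose, Fintype.card_fin]

lemma linIndep_pdOp [CharZero K] {m : ℕ} :
    LinearIndependent (MvPolynomial (Fin n) K)
      (fun α : ↥(Finset.Nat.antidiagonalTuple n m) => pdOp K n (↑α : Fin n → ℕ)) := by
  rw [linearIndependent_iff']
  intro t g hg i hi
  have happ := congrArg (fun θ : Module.End K (MvPolynomial (Fin n) K) =>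
    θ (MvPolynomial.monomial (Finsupp.equivFunOnFinite.symm (↑i : Fin n → ℕ)) (1:K))) hg
  simp only [LinearMap.coe_sum, Finset.sum_apply, LinearMap.smul_apply,
    LinearMap.zero_apply] at happ
  rw [Finset.sum_eq_single_of_mem i hi] at happ
  · rw [pdOp_eval_self] at happ
    have hC : (MvPolynomial.C (((∏ j, ((↑i : Fin n → ℕ) j).factorial : ℕ) : K))
        : MvPolynomial (Fin n) K) ≠ 0 := by
      rw [Ne, MvPolynomial.C_eq_zero, Nat.cast_eq_zero]
      positivity
    have := happ
    rw [smul_eq_mul] at this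
    exact (mul_eq_zero.mp this).resolve_right hC
  · intro b hb hbi
    have hz := pdOp_eval_ne (K := K) (↑i : Fin n → ℕ) (↑b : Fin n → ℕ)
      (by rw [Finset.Nat.mem_antidiagonalTuple.mp b.2, Finset.Nat.mem_antidiagonalTuple.mp i.2])
      (fun h => hbi (Subtype.coe_injective h))
    rw [hz, smul_zero]

lemma lf_ne_zero (v : Fin n → K) (hv : v ≠ 0) : lf v ≠ 0 := by
  intro h
  apply hv
  funext j
  have := congrArg (MvPolynomial.coeff (Finsupp.single j 1)) h
  simp only [lf, MvPolynomial.coeff_sum, MvPolynomial.coeff_C_mul, MvPolynomial.coeff_X',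
    MvPolynomial.coeff_zero] at this
  have hiff : ∀ i : Fin n, (Finsupp.single i 1 = Finsupp.single j (1:ℕ)) ↔ i = j :=
    fun i => Finsupp.single_left_inj one_ne_zero
  simp only [hiff, mul_ite, mul_one, mul_zero] at this
  rw [Finset.sum_ite_eq' Finset.univ j (fun i => v i)] at this
  simpa using this

end Aux2

set_option maxHeartbeats 1000000 in
set_option synthInstance.maxHeartbeats 400000 in
/-- if the `S`-module `D^{(m)}(𝒜)` is free, then its rank is
`s_m = binom(n+m-1, m)`. -/
theorem rank_of_free_Dmod
    {K : Type*} [Field K] [CharZero K] {n r m : ℕ}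
    (hn : 2 ≤ n)
    (a : Fin r → (Fin n → K)) (ha : ∀ i, a i ≠ 0)
    (hdist : ∀ i j : Fin r, i ≠ j → ∀ c : K, a i ≠ c • a j)
    (hfree : Module.Free (MvPolynomial (Fin n) K) ↥(Dmod K n (∏ i, lf (a i)) m)) :
    Module.rank (MvPolynomial (Fin n) K) ↥(Dmod K n (∏ i, lf (a i)) m)
      = Nat.choose (n + m - 1) m := by
  classical
  set Q : MvPolynomial (Fin n) K := ∏ i, lf (a i) with hQdef
  have hQ : Q ≠ 0 := Finset.prod_ne_zero_iff.mpr fun i _ => lf_ne_zero _ (ha i)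
  have hmem : ∀ α : ↥(Finset.Nat.antidiagonalTuple n m),
      Q • pdOp K n (↑α : Fin n → ℕ) ∈ Dmod K n Q m := by
    intro α
    constructor
    · exact Submodule.smul_mem _ _ (Submodule.subset_span
        ⟨↑α, Finset.Nat.mem_antidiagonalTuple.mp α.2, rfl⟩)
    · intro f hf
      exact dvd_mul_right Q (pdOp K n (↑α) f)
  clear_value Q
  have h2 : LinearIndependent (MvPolynomial (Fin n) K)
      (fun α : ↥(Finset.Nat.antidiagonalTuple n m) => Q • pdOp K n (↑α : Fin n → ℕ)) := by
    rw [linearIndependent_iff']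
    intro t g hg i hi
    have h3 := linearIndependent_iff'.mp (linIndep_pdOp (K := K) (n := n) (m := m)) t
      (fun j => g j * Q) ?_ i hi
    · exact (mul_eq_zero.mp h3).resolve_right hQ
    · rw [← hg]
      apply Finset.sum_congr rfl
      intro j _
      rw [mul_smul, smul_comm]
  have i3 : ⇑(Dmod K n Q m).subtype ∘ (fun α : ↥(Finset.Nat.antidiagonalTuple n m) =>
        (⟨Q • pdOp K n (↑α : Fin n → ℕ), hmem α⟩ : ↥(Dmod K n Q m)))
      = (fun α : ↥(Finset.Nat.antidiagonalTuple n m) => Q • pdOp K n (↑α : Fin n → ℕ)) := rfl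
  have hw : LinearIndependent (MvPolynomial (Fin n) K)
      (fun α : ↥(Finset.Nat.antidiagonalTuple n m) =>
        (⟨Q • pdOp K n (↑α : Fin n → ℕ), hmem α⟩ : ↥(Dmod K n Q m))) :=
    LinearIndependent.of_comp
      (v := fun α : ↥(Finset.Nat.antidiagonalTuple n m) =>
        (⟨Q • pdOp K n (↑α : Fin n → ℕ), hmem α⟩ : ↥(Dmod K n Q m)))
      (Dmod K n Q m).subtype (by rw [i3]; exact h2)
  have hle1 : ((Nat.choose (n + m - 1) m : ℕ) : Cardinal) ≤
      Module.rank (MvPolynomial (Fin n) K) ↥(Dmod K n Q m) := by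
    have h := LinearIndependent.cardinal_lift_le_rank (R := MvPolynomial (Fin n) K)
      (M := ↥(Dmod K n Q m)) hw
    rw [Cardinal.mk_coe_finset, card_adt] at h
    simpa using h
  have hle2 : Module.rank (MvPolynomial (Fin n) K) ↥(Dmod K n Q m) ≤
      ((Nat.choose (n + m - 1) m : ℕ) : Cardinal) := by
    refine (Submodule.rank_mono (inf_le_left : Dmod K n Q m ≤ homOrder K n m)).trans ?_
    refine (rank_span_le _).trans ?_
    have hset : {θ : Module.End K (MvPolynomial (Fin n) K) |
        ∃ α : Fin n → ℕ, (∑ j, α j) = m ∧ θ = pdOp K n α}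
        = Set.range (fun α : ↥(Finset.Nat.antidiagonalTuple n m) => pdOp K n (↑α : Fin n → ℕ)) := by
      ext θ
      constructor
      · rintro ⟨α, hα, rfl⟩
        exact ⟨⟨α, Finset.Nat.mem_antidiagonalTuple.mpr hα⟩, rfl⟩
      · rintro ⟨α, rfl⟩
        exact ⟨↑α, Finset.Nat.mem_antidiagonalTuple.mp α.2, rfl⟩
    rw [hset]
    have hr := Cardinal.mk_range_le_lift
      (f := fun α : ↥(Finset.Nat.antidiagonalTuple n m) => pdOp K n (↑α : Fin n → ℕ))
    rw [Cardinal.mk_coe_finset, card_adt, Cardinal.lift_natCast, Cardinal.lift_uzero] at hr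
    simpa using hr
  exact le_antisymm hle2 hle1
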